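/- Consider the B-A-C trajectory: p(0) = 0, v(0) = v0, u = u_max on [0, τ_c], affine u from u_max to 0 on [τ_c, τ_s] with τ_c + τ_s = 2β/u_max where β = v_max - v0. Then the position at the state-constraint junction is p(τ_s) = (4β/3)τ_s - 2β²/(3u_max) - (u_max/6)τ_s² + v0·τ_s. -/

import Mathlib

theorem eq_on_of_deriv_aux (f g : ℝ → ℝ) (a b : ℝ)
    (hf : ∀ t ∈ Set.Icc a b, HasDerivAt (fun s => f s - g s) 0 t)
    (h0 : f a = g a) : ∀ x ∈ Set.Icc a b, f x = g x := by
  intro x hx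
  have h := constant_of_has_deriv_right_zero
    (f := fun s => f s - g s)
    (fun t ht => (hf t ht).continuousAt.continuousWithinAt)
    (fun t ht => (hf t (Set.Ico_subset_Icc_self ht)).hasDerivWithinAt) x hx
  have : f x - g x = f a - g a := h
  rw [h0] at this
  linarith

theorem stmt_16 (v0 vmax umax τc τs : ℝ)
    (humax : umax > 0)
    (β : ℝ) (hβdef : β = vmax - v0) (hβ : β > 0)
    (hτc : 0 < τc) (hτ : τc < τs)
    (hsum : τc + τs = 2 * β / umax)
    (u v p : ℝ → ℝ)
    (hu1 : ∀ t ∈ Set.Icc 0 τc, u t = umax)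
    (hu2 : ∀ t ∈ Set.Icc τc τs, u t = umax * (τs - t) / (τs - τc))
    (hp0 : p 0 = 0) (hv0 : v 0 = v0)
    (hp' : ∀ t ∈ Set.Icc (0:ℝ) τs, HasDerivAt p (v t) t)
    (hv' : ∀ t ∈ Set.Icc (0:ℝ) τs, HasDerivAt v (u t) t) :
    p τs = (4 * β / 3) * τs - 2 * β ^ 2 / (3 * umax) - (umax / 6) * τs ^ 2 + v0 * τs := by
  have hne : τs - τc ≠ 0 := sub_ne_zero.mpr (ne_of_gt hτ)
  have hsub1 : Set.Icc (0:ℝ) τc ⊆ Set.Icc 0 τs :=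
    Set.Icc_subset_Icc le_rfl hτ.le
  have hsub2 : Set.Icc τc τs ⊆ Set.Icc 0 τs :=
    Set.Icc_subset_Icc hτc.le le_rfl
  -- Step 1: v on [0, τc]
  have hv1 : ∀ x ∈ Set.Icc (0:ℝ) τc, v x = v0 + umax * x := by
    apply eq_on_of_deriv_aux
    · intro t ht
      have hd : HasDerivAt (fun s : ℝ => v0 + umax * s) umax t := by
        simpa using ((hasDerivAt_id t).const_mul umax).const_add v0
      have := (hv' t (hsub1 ht)).fun_sub hd
      simpa [hu1 t ht] using this
    · simp [hv0]
  -- Step 2: v on [τc, τs]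
  have hV2d : ∀ t : ℝ, HasDerivAt
      (fun s : ℝ => v0 + umax * τc + umax * ((τs * (s - τc) - (s ^ 2 - τc ^ 2) / 2) / (τs - τc)))
      (umax * (τs - t) / (τs - τc)) t := by
    intro t
    have h1 : HasDerivAt (fun s : ℝ => τs * (s - τc) - (s ^ 2 - τc ^ 2) / 2)
        (τs * 1 - 2 * t ^ 1 / 2) t := by
      exact (((hasDerivAt_id t).sub_const τc).const_mul τs).sub
        (((hasDerivAt_pow 2 t).sub_const _).div_const 2)
    have := ((h1.div_const (τs - τc)).const_mul umax).const_add (v0 + umax * τc)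
    refine this.congr_deriv ?_
    ring
  have hv2 : ∀ x ∈ Set.Icc τc τs, v x =
      v0 + umax * τc + umax * ((τs * (x - τc) - (x ^ 2 - τc ^ 2) / 2) / (τs - τc)) := by
    apply eq_on_of_deriv_aux
    · intro t ht
      have h := (hv' t (hsub2 ht)).fun_sub (hV2d t)
      refine h.congr_deriv ?_
      rw [hu2 t ht]; ring
    · have := hv1 τc ⟨hτc.le, le_rfl⟩
      simp [this]
  -- Step 3: p on [0, τc]
  have hp1 : ∀ x ∈ Set.Icc (0:ℝ) τc, p x = v0 * x + umax * x ^ 2 / 2 := by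
    apply eq_on_of_deriv_aux
    · intro t ht
      have hd : HasDerivAt (fun s : ℝ => v0 * s + umax * s ^ 2 / 2)
          (v0 * 1 + umax * (2 * t ^ 1) / 2) t := by
        exact (((hasDerivAt_id t).const_mul v0)).add
          (((hasDerivAt_pow 2 t).const_mul umax).div_const 2)
      have h := (hp' t (hsub1 ht)).fun_sub hd
      refine h.congr_deriv ?_
      rw [hv1 t ht]; ring
    · simp [hp0]
  have hpτc : p τc = v0 * τc + umax * τc ^ 2 / 2 := hp1 τc ⟨hτc.le, le_rfl⟩
  -- Step 4: p on [τc, τs]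
  have hp2 : ∀ x ∈ Set.Icc τc τs, p x =
      p τc + (v0 + umax * τc) * (x - τc)
        + umax * (τs * (x - τc) ^ 2 / 2 - (x ^ 3 / 6 - τc ^ 2 * x / 2)
            + (τc ^ 3 / 6 - τc ^ 3 / 2)) / (τs - τc) := by
    apply eq_on_of_deriv_aux
    · intro t ht
      have h1 : HasDerivAt (fun s : ℝ => τs * (s - τc) ^ 2 / 2 - (s ^ 3 / 6 - τc ^ 2 * s / 2)
            + (τc ^ 3 / 6 - τc ^ 3 / 2))
          (τs * (2 * (t - τc) ^ 1 * 1) / 2 - (3 * t ^ 2 * 1 / 6 - τc ^ 2 * 1 / 2)) t := by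
        have ha : HasDerivAt (fun s : ℝ => (s - τc) ^ 2) (2 * (t - τc) ^ 1 * 1) t :=
          ((hasDerivAt_id t).sub_const τc).pow 2
        have hb : HasDerivAt (fun s : ℝ => s ^ 3 / 6 - τc ^ 2 * s / 2)
            (3 * t ^ 2 * 1 / 6 - τc ^ 2 * 1 / 2) t := by
          have h3 : HasDerivAt (fun s : ℝ => s ^ 3) (3 * t ^ 2 * 1) t := by
            simpa using (hasDerivAt_pow 3 t)
          exact (h3.div_const 6).sub (((hasDerivAt_id t).const_mul (τc ^ 2)).div_const 2)
        exact (((ha.const_mul τs).div_const 2).sub hb).add_const _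
      have hd := (((h1.div_const (τs - τc)).const_mul umax).const_add 0).const_add (p τc)
      have hd2 : HasDerivAt (fun s : ℝ => p τc + (v0 + umax * τc) * (s - τc)
            + umax * (τs * (s - τc) ^ 2 / 2 - (s ^ 3 / 6 - τc ^ 2 * s / 2)
                + (τc ^ 3 / 6 - τc ^ 3 / 2)) / (τs - τc))
          ((v0 + umax * τc)
            + umax * (τs * (t - τc) - (t ^ 2 - τc ^ 2) / 2) / (τs - τc)) t := by
        have hlin : HasDerivAt (fun s : ℝ => p τc + (v0 + umax * τc) * (s - τc))
            (v0 + umax * τc) t := by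
          simpa using (((hasDerivAt_id t).sub_const τc).const_mul (v0 + umax * τc)).const_add (p τc)
        have hq := (h1.div_const (τs - τc)).const_mul umax
        have := hlin.fun_add hq
        refine (this.congr_deriv ?_).congr_of_eventuallyEq (Filter.Eventually.of_forall fun s => ?_)
        · field_simp
          ring
        · ring
      have h := (hp' t (hsub2 ht)).fun_sub hd2
      refine h.congr_deriv ?_
      rw [hv2 t ht]; ring
    · field_simp
      ring_nf
  have hpτs := hp2 τs ⟨hτ.le, le_rfl⟩
  have hβu : umax * (τc + τs) = 2 * β := by
    field_simp at hsum
    linarith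
  rw [hpτs, hpτc]
  have hβeq : β = umax * (τc + τs) / 2 := by
    field_simp
    linarith
  rw [hβeq]
  field_simp
  ring
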